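/- Let X be a locally connected continuum (nonempty compact connected locally connected metric space) and f : X → X a continuous surjection. Then for every x ∈ X, the set RP⁻(x) = {y ∈ X : (x,y) ∈ RP⁻(X,f)} is connected. -/

import Mathlib

open Metric Filter Topology Set

section Defs
variable {X Y : Type*}

/-- Factor map (semi-conjugacy): continuous surjection intertwining the dynamics. -/
def IsFactorMap [TopologicalSpace X] [TopologicalSpace Y]
    (f : X → X) (g : Y → Y) (π : X → Y) : Prop :=
  Continuous π ∧ Function.Surjective π ∧ π ∘ f = g ∘ π

/-- Monotone map: the preimage of every point is connected. -/
def MonotoneFibers [TopologicalSpace X] [TopologicalSpace Y] (π : X → Y) : Prop :=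
  ∀ y : Y, IsConnected (π ⁻¹' {y})

/-- Minimal map: continuous, and no proper nonempty closed invariant subset. -/
def MinimalMap [TopologicalSpace X] (f : X → X) : Prop :=
  Continuous f ∧ ∀ M : Set X, IsClosed M → M.Nonempty → MapsTo f M M → M = univ

/-- Topological transitivity. -/
def TransitiveMap [TopologicalSpace X] (f : X → X) : Prop :=
  ∀ U V : Set X, IsOpen U → IsOpen V → U.Nonempty → V.Nonempty →
    ∃ n : ℕ, ((f^[n]) '' U ∩ V).Nonempty

/-- Weak mixing: the product system is transitive. -/
def WeaklyMixing [TopologicalSpace X] (f : X → X) : Prop :=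
  TransitiveMap (fun p : X × X => (f p.1, f p.2))

/-- Regionally proximal pairs. -/
def RPplus [MetricSpace X] (f : X → X) (x y : X) : Prop :=
  ∀ ε > (0 : ℝ), ∀ Ox Oy : Set X, IsOpen Ox → IsOpen Oy → x ∈ Ox → y ∈ Oy →
    ∃ x' ∈ Ox, ∃ y' ∈ Oy, ∃ n : ℕ, dist (f^[n] x') (f^[n] y') < ε

/-- Negatively regionally proximal pairs. -/
def RPminus [MetricSpace X] (f : X → X) (x y : X) : Prop :=
  ∃ (xs ys : ℕ → X) (m : ℕ → ℕ),
    Tendsto m atTop atTop ∧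
    Tendsto (fun n => dist (xs n) (ys n)) atTop (𝓝 0) ∧
    Tendsto (fun n => f^[m n] (xs n)) atTop (𝓝 x) ∧
    Tendsto (fun n => f^[m n] (ys n)) atTop (𝓝 y)

/-- `x` and `y` are identified by the maximal equicontinuous factor, i.e.
they are identified by every equicontinuous factor of `(X, f)`. -/
def SeqRel [MetricSpace X] (f : X → X) (x y : X) : Prop :=
  ∀ (Y : Type) (_ : MetricSpace Y) (_ : CompactSpace Y) (g : Y → Y) (π : X → Y),
    Continuous g → Equicontinuous (fun n : ℕ => g^[n]) →
    IsFactorMap f g π → π x = π y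

/-- A null family: for each ε > 0 only finitely many members have diameter ≥ ε. -/
def NullFamily [MetricSpace X] {ι : Type*} (A : ι → Set X) : Prop :=
  ∀ ε > (0 : ℝ), {i | ε ≤ diam (A i)}.Finite

/-- Finitely Suslinean: every pairwise disjoint family of subcontinua is null. -/
def FinitelySuslinean (X : Type*) [MetricSpace X] : Prop :=
  ∀ (ι : Type) (A : ι → Set X),
    (∀ i, (A i).Nonempty ∧ IsCompact (A i) ∧ IsConnected (A i)) →
    Pairwise (Function.onFun Disjoint A) → NullFamily A

/-- Suslinean: every pairwise disjoint family of nondegenerate subcontinua is countable. -/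
def Suslinean (X : Type*) [MetricSpace X] : Prop :=
  ∀ S : Set (Set X),
    (∀ A ∈ S, IsCompact A ∧ IsConnected A ∧ A.Nontrivial) →
    S.Pairwise Disjoint → S.Countable

/-- Hereditarily locally connected: every subcontinuum is locally connected. -/
def HereditarilyLocallyConnected (X : Type*) [TopologicalSpace X] : Prop :=
  ∀ A : Set X, IsCompact A → IsConnected A → LocallyConnectedSpace A

/-- Homogeneous space: the homeomorphism group acts transitively. -/
def HomogeneousSpace (X : Type*) [TopologicalSpace X] : Prop :=
  ∀ x y : X, ∃ h : X ≃ₜ X, h x = y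

/-- Mesh of a set: supremum of diameters of its connected components. -/
noncomputable def Mesh [MetricSpace X] (B : Set X) : ℝ :=
  ⨆ x : B, diam (connectedComponentIn B (x : X))

/-- Positively continuum-wise expansive map. -/
def PosCWExpansive [MetricSpace X] (f : X → X) : Prop :=
  ∃ c > (0 : ℝ), ∀ A : Set X, IsCompact A → IsConnected A → A.Nontrivial →
    ∃ n : ℕ, c < diam (f^[n] '' A)

/-- Minimal set of a map. -/
def IsMinimalSet [TopologicalSpace X] (f : X → X) (M : Set X) : Prop :=
  IsClosed M ∧ M.Nonempty ∧ MapsTo f M M ∧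
    ∀ N ⊆ M, IsClosed N → N.Nonempty → MapsTo f N N → N = M

/-- Rotation of the circle by angle `2πα`. -/
noncomputable def circleRotation (α : ℝ) : Circle → Circle :=
  fun z => Circle.exp (2 * Real.pi * α) * z

end Defs

section Aux

variable {X : Type*} [MetricSpace X]

private lemma ulc_aux [CompactSpace X] [LocallyConnectedSpace X] {ε : ℝ} (hε : 0 < ε) :
    ∃ δ > (0:ℝ), ∀ a b : X, dist a b < δ →
      ∃ A : Set X, IsPreconnected A ∧ a ∈ A ∧ b ∈ A ∧ ∀ u ∈ A, ∀ v ∈ A, dist u v ≤ ε := by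
  have hball : ∀ x : X, ∃ V : Set X, V ⊆ ball x (ε/3) ∧ IsOpen V ∧ x ∈ V ∧ IsConnected V := by
    intro x
    exact locallyConnectedSpace_iff_subsets_isOpen_isConnected.mp ‹_› x (ball x (ε/3))
      (ball_mem_nhds x (by linarith))
  choose V hVsub hVopen hVmem hVconn using hball
  have hcov : (univ : Set X) ⊆ ⋃ x, V x := fun x _ => mem_iUnion.2 ⟨x, hVmem x⟩
  obtain ⟨δ, hδ, hleb⟩ := lebesgue_number_lemma_of_metric isCompact_univ hVopen hcov
  refine ⟨δ, hδ, fun a b hab => ?_⟩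
  obtain ⟨i, hi⟩ := hleb a (mem_univ a)
  refine ⟨V i, (hVconn i).isPreconnected, hi (mem_ball_self hδ),
    hi (by rwa [mem_ball, dist_comm]), ?_⟩
  intro u hu v hv
  have h1 : dist u i < ε/3 := mem_ball.mp (hVsub i hu)
  have h2 : dist v i < ε/3 := mem_ball.mp (hVsub i hv)
  calc dist u v ≤ dist u i + dist i v := dist_triangle _ _ _
    _ ≤ ε := by rw [dist_comm i v]; linarith

private lemma key_aux [CompactSpace X] (f : X → X) (hf : Continuous f)
    {x y : X} (a b : ℕ → X) (M : ℕ → ℕ) (A : ℕ → Set X)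
    (hAc : ∀ k, IsPreconnected (A k)) (haA : ∀ k, a k ∈ A k) (hbA : ∀ k, b k ∈ A k)
    (hsmall : ∀ k, ∀ u ∈ A k, ∀ v ∈ A k, dist u v ≤ 1/((k:ℝ)+1))
    (hM : Tendsto M atTop atTop)
    (hp : Tendsto (fun k => f^[M k] (a k)) atTop (𝓝 x))
    (hq : Tendsto (fun k => f^[M k] (b k)) atTop (𝓝 y)) :
    ∃ L : Set X, IsPreconnected L ∧ x ∈ L ∧ y ∈ L ∧ ∀ z ∈ L, RPminus f x z := by
  set B : ℕ → Set X := fun k => f^[M k] '' A k with hB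
  have hBc : ∀ k, IsPreconnected (B k) :=
    fun k => (hAc k).image _ (hf.iterate (M k)).continuousOn
  set L : Set X := {z | ∀ ε > (0:ℝ), ∃ᶠ k in atTop, ∃ w ∈ B k, dist z w < ε} with hLdef
  have hmem : ∀ (z : X) (w : ℕ → X), (∀ k, w k ∈ B k) → Tendsto w atTop (𝓝 z) → z ∈ L := by
    intro z w hw hzw ε hε
    have h1 : ∀ᶠ k in atTop, dist (w k) z < ε := (Metric.tendsto_atTop.mp hzw ε hε).imp
      (fun N hN => hN) |>.elim (fun N hN => eventually_atTop.mpr ⟨N, hN⟩)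
    exact (h1.mono (fun k hk => ⟨w k, hw k, by rwa [dist_comm]⟩)).frequently
  have hxL : x ∈ L := hmem x _ (fun k => mem_image_of_mem _ (haA k)) hp
  have hyL : y ∈ L := hmem y _ (fun k => mem_image_of_mem _ (hbA k)) hq
  have hLS : ∀ z ∈ L, RPminus f x z := by
    intro z hz
    have hsel : ∀ j : ℕ, ∃ k ≥ j, ∃ w ∈ B k, dist z w < 1/((j:ℝ)+1) := by
      intro j
      exact frequently_atTop.mp (hz (1/((j:ℝ)+1)) (by positivity)) j
    choose k hkge w hwB hwd using hsel
    choose u huA huw using fun j => (mem_image _ _ _).mp (hwB j)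
    have hk : Tendsto k atTop atTop := tendsto_atTop_mono hkge tendsto_id
    refine ⟨fun j => a (k j), u, fun j => M (k j), hM.comp hk, ?_, hp.comp hk, ?_⟩
    · apply squeeze_zero (fun j => dist_nonneg) (g := fun j : ℕ => 1/((j:ℝ)+1))
        (fun j => ?_) tendsto_one_div_add_atTop_nhds_zero_nat
      refine le_trans (hsmall (k j) _ (haA (k j)) _ (huA j)) ?_
      have hcast : ((j:ℝ)+1) ≤ ((k j : ℝ)+1) :=
        add_le_add_left (Nat.cast_le.mpr (hkge j)) 1
      exact one_div_le_one_div_of_le (by positivity) hcast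
    · have he : (fun j => f^[M (k j)] (u j)) = w := funext huw
      rw [he]
      rw [tendsto_iff_dist_tendsto_zero]
      exact squeeze_zero (fun j => dist_nonneg)
        (fun j => (by rw [dist_comm]; exact (hwd j).le)) tendsto_one_div_add_atTop_nhds_zero_nat
  have hLclosed : IsClosed L := by
    apply isClosed_of_closure_subset
    intro z hz ε hε
    obtain ⟨z', hz'L, hzz'⟩ := Metric.mem_closure_iff.mp hz (ε/2) (by linarith)
    refine (hz'L (ε/2) (by linarith)).mono ?_
    rintro n ⟨w, hwB, hwd⟩
    exact ⟨w, hwB, by calc dist z w ≤ dist z z' + dist z' w := dist_triangle _ _ _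
      _ < ε := by linarith⟩
  have husc : ∀ W : Set X, IsOpen W → L ⊆ W → ∀ᶠ k in atTop, B k ⊆ W := by
    intro W hW hLW
    by_contra hcon
    rw [Filter.not_eventually] at hcon
    have hsel : ∀ j : ℕ, ∃ k ≥ j, ∃ z ∈ B k, z ∉ W := by
      intro j
      obtain ⟨k, hk, hnk⟩ := frequently_atTop.mp hcon j
      obtain ⟨z, hz, hzW⟩ := not_subset.mp hnk
      exact ⟨k, hk, z, hz, hzW⟩
    choose k hkge z hzB hzW using hsel
    obtain ⟨z0, -, θ, hθ, hzlim⟩ := isCompact_univ.tendsto_subseq (fun j => mem_univ (z j))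
    have hz0W : z0 ∉ W := by
      have hmemc : ∀ᶠ j in atTop, (z ∘ θ) j ∈ Wᶜ :=
        Eventually.of_forall (fun j => hzW (θ j))
      exact hW.isClosed_compl.mem_of_tendsto hzlim hmemc
    apply hz0W
    apply hLW
    intro ε hε
    rw [frequently_atTop]
    intro N0
    obtain ⟨J, hJ⟩ := Metric.tendsto_atTop.mp hzlim ε hε
    set j := max J N0 with hj
    refine ⟨k (θ j), ?_, z (θ j), hzB _, ?_⟩
    · calc N0 ≤ j := le_max_right _ _
        _ ≤ θ j := hθ.le_apply
        _ ≤ k (θ j) := hkge _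
    · rw [dist_comm]
      exact hJ j (le_max_left _ _)
  have hLpre : IsPreconnected L := by
    rintro U V hU hV hLUV ⟨zu, hzuL, hzuU⟩ ⟨zv, hzvL, hzvV⟩
    by_contra hcon
    rw [not_nonempty_iff_eq_empty] at hcon
    set E : Set X := L \ V with hEdef
    set F : Set X := L \ U with hFdef
    have hEc : IsClosed E := hLclosed.inter hV.isClosed_compl
    have hFc : IsClosed F := hLclosed.inter hU.isClosed_compl
    have hEF : Disjoint E F := by
      rw [Set.disjoint_left]
      rintro w ⟨hwL, hwV⟩ ⟨-, hwU⟩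
      rcases hLUV hwL with h | h
      exacts [hwU h, hwV h]
    have hsplit : ∀ w ∈ L, w ∈ E ∨ w ∈ F := by
      intro w hw
      by_cases hwV : w ∈ V
      · refine Or.inr ⟨hw, fun hwU => ?_⟩
        exact absurd hcon (Set.nonempty_iff_ne_empty.mp ⟨w, hw, hwU, hwV⟩)
      · exact Or.inl ⟨hw, hwV⟩
    have hzuE : zu ∈ E := by
      refine ⟨hzuL, fun hzuV => ?_⟩
      exact absurd hcon (Set.nonempty_iff_ne_empty.mp ⟨zu, hzuL, hzuU, hzuV⟩)
    have hzvF : zv ∈ F := by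
      refine ⟨hzvL, fun hzvU => ?_⟩
      exact absurd hcon (Set.nonempty_iff_ne_empty.mp ⟨zv, hzvL, hzvU, hzvV⟩)
    obtain ⟨U', V', hU', hV', hEU', hFV', hdisj⟩ := normal_separation hEc hFc hEF
    have hfreq : ∀ (z0 : X) (P : Set X), z0 ∈ L → IsOpen P → z0 ∈ P →
        ∃ᶠ k in atTop, (B k ∩ P).Nonempty := by
      intro z0 P hz0 hP hz0P
      obtain ⟨r, hr, hballP⟩ := Metric.isOpen_iff.mp hP z0 hz0P
      refine (hz0 r hr).mono ?_
      rintro n ⟨w, hwB, hwd⟩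
      exact ⟨w, hwB, hballP (by rwa [mem_ball, dist_comm])⟩
    have main : ∀ P Q : Set X, IsOpen P → IsOpen Q → Disjoint P Q → L ⊆ P ∪ Q →
        x ∈ P → (∃ w0 ∈ L, w0 ∈ Q) → False := by
      rintro P Q hP hQ hPQ hsub hxP ⟨w0, hw0L, hw0Q⟩
      have hev : ∀ᶠ n in atTop, B n ⊆ P ∪ Q := husc _ (hP.union hQ) hsub
      have hevP : ∀ᶠ n in atTop, (B n ∩ P).Nonempty := by
        refine (hp.eventually (hP.eventually_mem hxP)).mono (fun n hn => ?_)
        exact ⟨f^[M n] (a n), mem_image_of_mem _ (haA n), hn⟩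
      have hfQ := hfreq w0 Q hw0L hQ hw0Q
      obtain ⟨n, hnQ, hnsub, hnP⟩ := (hfQ.and_eventually (hev.and hevP)).exists
      obtain ⟨w, -, hw⟩ := hBc n P Q hP hQ hnsub hnP hnQ
      exact Set.disjoint_left.mp hPQ hw.1 hw.2
    have hxinL : x ∈ L := hxL
    rcases hsplit x hxinL with hxE | hxF
    · exact main U' V' hU' hV' hdisj
        (fun w hw => (hsplit w hw).imp (fun h => hEU' h) (fun h => hFV' h))
        (hEU' hxE) ⟨zv, hzvL, hFV' hzvF⟩
    · exact main V' U' hV' hU' hdisj.symm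
        (fun w hw => ((hsplit w hw).imp (fun h => hEU' h) (fun h => hFV' h)).symm)
        (hFV' hxF) ⟨zu, hzuL, hEU' hzuE⟩
  exact ⟨L, hLpre, hxL, hyL, hLS⟩

end Aux

/-- on a locally connected continuum, RP⁻(x) is connected. -/
theorem stmt1 {X : Type*} [MetricSpace X] [CompactSpace X] [ConnectedSpace X]
    [LocallyConnectedSpace X]
    (f : X → X) (hf : Continuous f) (hsurj : Function.Surjective f)
    (x : X) : IsConnected {y | RPminus f x y} := by
  have hxS : RPminus f x x := by
    have hit : ∀ n : ℕ, Function.Surjective (f^[n]) :=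
      fun n => Function.Surjective.iterate hsurj n
    choose u hu using fun n => hit n x
    refine ⟨u, u, id, tendsto_id, by simp only [dist_self]; exact tendsto_const_nhds, ?_, ?_⟩ <;>
      · simp only [id_eq, hu]; exact tendsto_const_nhds
  refine ⟨⟨x, hxS⟩, isPreconnected_of_forall x ?_⟩
  intro y hy
  obtain ⟨xs, ys, m, hm, hd, hpx, hpy⟩ := hy
  have hδ : ∀ k : ℕ, ∃ δ > (0:ℝ), ∀ a b : X, dist a b < δ →
      ∃ A : Set X, IsPreconnected A ∧ a ∈ A ∧ b ∈ A ∧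
        ∀ u ∈ A, ∀ v ∈ A, dist u v ≤ 1/((k:ℝ)+1) :=
    fun k => ulc_aux (by positivity)
  choose δ hδpos hδp using hδ
  have hN : ∀ k : ℕ, ∃ N : ℕ, ∀ n ≥ N, dist (xs n) (ys n) < δ k := by
    intro k
    have := hd.eventually (gt_mem_nhds (hδpos k))
    exact eventually_atTop.mp this
  choose N hNp using hN
  set φ : ℕ → ℕ := fun k => max (N k) k with hφdef
  have hφ : Tendsto φ atTop atTop := tendsto_atTop_mono (fun k => le_max_right _ _) tendsto_id
  have hA : ∀ k, ∃ A : Set X, IsPreconnected A ∧ xs (φ k) ∈ A ∧ ys (φ k) ∈ A ∧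
      ∀ u ∈ A, ∀ v ∈ A, dist u v ≤ 1/((k:ℝ)+1) :=
    fun k => hδp k _ _ (hNp k (φ k) (le_max_left _ _))
  choose A hAc haA hbA hsmall using hA
  obtain ⟨L, hLpre, hxL, hyL, hLS⟩ := key_aux f hf (fun k => xs (φ k)) (fun k => ys (φ k))
    (fun k => m (φ k)) A hAc haA hbA hsmall (hm.comp hφ) (hpx.comp hφ) (hpy.comp hφ)
  exact ⟨L, fun z hz => hLS z hz, hxL, hyL, hLpre⟩
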